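/- Let d ≥ 2, fix 1 ≤ i ≤ j ≤ d−1, let r0 = rd = 1 and r1,…,r_{d−1} be positive integers, and let n, r'_i, r', r, l be positive integers and ε ∈ (0,1) satisfying: r'_i ≤ n/6, r' ≤ r ≤ Σ_{k=1}^{d−1} r_{k−1}·r_k, n > max{200, Σ_{k=1}^{d−1} r_{k−1}·r_k}, and l > max{27·log(n/ε) + 9·log(2r/ε) + 18, 6·r'_i}. Consider r' pairwise disjoint sets of columns of the j-th unfolding of a random sampling pattern, each set consisting of n − r'_i columns, where for each column the set of observed positions is the image of l independent draws, each uniformly distributed over the column's n^j cells {1,…,n}^j, with draws independent across columns. Then with probability at least 1 − ε·r'/r, there exist subsets G_c of the observed positions of each of the r'·(n − r'_i) columns with |G_c| = r'_i + 1, such that for every nonempty subfamily T of these columns, r'·(m_i(T) − r'_i) ≥ |T|, where m_i(T) is the number of distinct values of the i-th coordinate among ⋃_{c∈T} G_c. -/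

import Mathlib

open Finset


lemma pow_self_le_factorial_mul_exp (s : ℕ) : (s:ℝ)^s ≤ s.factorial * Real.exp s := by
  induction s with
  | zero => simp
  | succ m ih =>
    rcases Nat.eq_zero_or_pos m with hm | hm
    · subst hm
      simp only [Nat.factorial, Nat.cast_one, pow_one, Nat.cast_ofNat, Nat.cast_zero]
      have h := Real.add_one_le_exp (1:ℝ)
      push_cast
      simpa using h.trans_eq (by norm_num)
    · have hm0 : (0:ℝ) < m := by exact_mod_cast hm
      have key : ((m+1:ℕ):ℝ)^m ≤ (m:ℝ)^m * Real.exp 1 := by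
        have h1 : ((m+1:ℕ):ℝ) = m * (1 + 1/m) := by field_simp; norm_num
        have h2 : (1 + 1/(m:ℝ))^m ≤ Real.exp 1 := by
          have := Real.add_one_le_exp (1/(m:ℝ))
          calc (1 + 1/(m:ℝ))^m ≤ (Real.exp (1/m))^m := by
                apply pow_le_pow_left₀ (by positivity) (by linarith)
          _ = Real.exp ((m:ℝ) * (1/m)) := by rw [← Real.exp_nat_mul]
          _ = Real.exp 1 := by field_simp
        calc ((m+1:ℕ):ℝ)^m = (m:ℝ)^m * (1+1/(m:ℝ))^m := by rw [h1, mul_pow]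
        _ ≤ (m:ℝ)^m * Real.exp 1 := by
            apply mul_le_mul_of_nonneg_left h2 (by positivity)
      have e1 : ((m+1:ℕ):ℝ)^(m+1) = ((m+1:ℕ):ℝ) * ((m+1:ℕ):ℝ)^m := by ring
      rw [e1]
      calc ((m+1:ℕ):ℝ) * ((m+1:ℕ):ℝ)^m ≤ ((m+1:ℕ):ℝ) * ((m:ℝ)^m * Real.exp 1) := by
            apply mul_le_mul_of_nonneg_left key (by positivity)
      _ ≤ ((m+1:ℕ):ℝ) * ((m.factorial * Real.exp m) * Real.exp 1) := by
            apply mul_le_mul_of_nonneg_left _ (by positivity)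
            apply mul_le_mul_of_nonneg_right ih (Real.exp_pos 1).le
      _ = ((m+1) * m.factorial : ℕ) * (Real.exp m * Real.exp 1) := by push_cast; ring
      _ = (m+1).factorial * Real.exp ((m:ℝ)+1) := by
            rw [← Real.exp_add, Nat.factorial_succ]
      _ = (m+1).factorial * Real.exp ((m+1:ℕ):ℝ) := by push_cast; ring_nf

set_option maxHeartbeats 1000000 in
lemma termBound (n k r l t : ℕ) (ε : ℝ)
    (hk1 : 1 ≤ k) (ht1 : 1 ≤ t) (htm : t ≤ n - k)
    (hkn : (k:ℝ) ≤ (n:ℝ)/6) (hn : 201 ≤ n) (hr1 : 1 ≤ r)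
    (hε0 : 0 < ε) (hε1 : ε < 1)
    (hkl : 6*k < l)
    (hl : 27 * Real.log ((n:ℝ)/ε) + 9 * Real.log (2*(r:ℝ)/ε) + 18 ≤ (l:ℝ)) :
    ((n-k).choose t : ℝ) * (n.choose (k+t-1)) * (((k+t-1 : ℕ):ℝ)/(n:ℝ))^(l*t) ≤ ε/((r:ℝ)*n) := by
  have hn0 : (0:ℝ) < n := by positivity
  have hr0 : (0:ℝ) < r := by exact_mod_cast hr1
  have hr1R : (1:ℝ) ≤ r := by exact_mod_cast hr1
  set a := Real.log ((n:ℝ)/ε) with ha_def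
  set b := Real.log (2*(r:ℝ)/ε) with hb_def
  -- basic log facts
  have ha48 : 4.85 ≤ a := by
    have h1 : (128:ℝ) ≤ (n:ℝ)/ε := by
      have h201 : (201:ℝ) ≤ n := by exact_mod_cast hn
      have : (n:ℝ) ≤ n/ε := by rw [le_div_iff₀ hε0]; nlinarith
      linarith
    have h2 : Real.log 128 ≤ a := Real.log_le_log (by norm_num) h1
    have h3 : Real.log 128 = 7 * Real.log 2 := by
      rw [show (128:ℝ) = 2^7 by norm_num, Real.log_pow]; push_cast; ring
    nlinarith [Real.log_two_gt_d9]
  have hb_pos : Real.log 2 ≤ b := by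
    apply Real.log_le_log (by norm_num)
    rw [le_div_iff₀ hε0]; nlinarith
  have hlog2 : (0.6931:ℝ) ≤ Real.log 2 := by nlinarith [Real.log_two_gt_d9]
  have hb0 : 0 < b := lt_of_lt_of_le (by norm_num) (le_trans hlog2 hb_pos)
  have ha0 : 0 < a := by linarith
  have hLN : Real.log (n:ℝ) ≤ a := by
    apply Real.log_le_log hn0
    rw [le_div_iff₀ hε0]; nlinarith
  have hLNpos : 0 < Real.log (n:ℝ) :=
    Real.log_pos (by exact_mod_cast (by omega : 1 < n))
  have ha27 : a ≤ (l:ℝ)/27 := by linarith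
  have hb9 : b ≤ (l:ℝ)/9 := by linarith
  have hl150 : (155:ℝ) ≤ l := by nlinarith
  have hlR : (6*(k:ℝ)) < l := by exact_mod_cast hkl
  -- final target value
  have htarget : Real.exp (-(a+b)) ≤ ε/((r:ℝ)*n) := by
    rw [Real.exp_neg, Real.exp_add, ha_def, hb_def,
      Real.exp_log (by positivity), Real.exp_log (by positivity)]
    have heq : ((n:ℝ)/ε * (2*(r:ℝ)/ε))⁻¹ = ε*ε/(2*(r:ℝ)*n) := by
      field_simp
    rw [heq, div_le_div_iff₀ (by positivity) (by positivity)]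
    nlinarith [mul_nonneg (mul_nonneg (by linarith : (0:ℝ) ≤ 1-ε) hε0.le)
      (by positivity : (0:ℝ) ≤ (r:ℝ)*n)]
  set s : ℕ := k + t - 1 with hs_def
  have hs_eq : (s:ℝ) = (k:ℝ) + t - 1 := by
    have h : s + 1 = k + t := by omega
    have h2 := congrArg (Nat.cast : ℕ → ℝ) h
    push_cast at h2; linarith
  have hs1 : 1 ≤ s := by omega
  have hkn6 : 6*k ≤ n := by exact_mod_cast (by linarith : (6*(k:ℝ)) ≤ (n:ℝ))
  have hsn : s ≤ n - 1 := by omega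
  have hslt : s ≤ l * t := by
    obtain ⟨t', rfl⟩ : ∃ t', t = t' + 1 := ⟨t-1, by omega⟩
    have h1 : t' ≤ l * t' := Nat.le_mul_of_pos_left t' (by omega)
    have h2 : l * (t' + 1) = l * t' + l := by ring
    omega
  have hT1 : (1:ℝ) ≤ t := by exact_mod_cast ht1
  have hsR : (s:ℝ) ≤ (l:ℝ)/6 + t := by rw [hs_eq]; linarith
  have hsltR : (s:ℝ) ≤ (l:ℝ) * t := by exact_mod_cast hslt
  have hLT : (l:ℝ)*t = ((l*t : ℕ):ℝ) := by push_cast; ring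
  rcases le_or_gt (2*s) n with hcase | hcase
  · -- Case 1 : s/n ≤ 1/2
    have hhalf : (s:ℝ)/n ≤ 1/2 := by
      rw [div_le_div_iff₀ hn0 (by norm_num)]
      have : (2*(s:ℝ)) ≤ n := by exact_mod_cast hcase
      linarith
    have hρ0 : (0:ℝ) ≤ (s:ℝ)/n := by positivity
    have hC1 : ((n-k).choose t : ℝ) ≤ (n:ℝ)^t := by
      calc ((n-k).choose t : ℝ) ≤ (((n-k)^t:ℕ):ℝ) := by exact_mod_cast Nat.choose_le_pow _ _
      _ = ((n-k:ℕ):ℝ)^t := by push_cast; ring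
      _ ≤ (n:ℝ)^t := by
          apply pow_le_pow_left₀ (by positivity)
          exact_mod_cast Nat.sub_le n k
    have hC2 : (n.choose s : ℝ) * ((s:ℝ)/n)^s ≤ Real.exp s := by
      have hd : (n.choose s : ℝ) * (s.factorial:ℝ) ≤ (n:ℝ)^s := by
        have h2 : s.factorial * n.choose s ≤ n ^ s := by
          rw [← Nat.descFactorial_eq_factorial_mul_choose]; exact Nat.descFactorial_le_pow n s
        calc (n.choose s:ℝ) * s.factorial = ((s.factorial * n.choose s : ℕ):ℝ) := by push_cast; ring
        _ ≤ ((n^s : ℕ):ℝ) := by exact_mod_cast h2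
        _ = (n:ℝ)^s := by push_cast; ring
      have hfac : (0:ℝ) < s.factorial := by exact_mod_cast s.factorial_pos
      have hss : (s:ℝ)^s ≤ s.factorial * Real.exp s := pow_self_le_factorial_mul_exp s
      have hmul := mul_le_mul hd hss (by positivity) (by positivity)
      have key : (n.choose s : ℝ) * ((s:ℝ)/n)^s
          = ((n.choose s:ℝ) * s.factorial * ((s:ℝ)^s))/(s.factorial * (n:ℝ)^s) := by
        rw [div_pow]; field_simp
      rw [key, div_le_iff₀ (by positivity)]
      calc (n.choose s:ℝ) * s.factorial * ((s:ℝ)^s) ≤ (n:ℝ)^s * (s.factorial * Real.exp s) := hmul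
      _ = Real.exp s * (s.factorial * (n:ℝ)^s) := by ring
    have hsplit : ((s:ℝ)/n)^(l*t) = ((s:ℝ)/n)^s * ((s:ℝ)/n)^(l*t - s) := by
      rw [← pow_add]; congr 1; omega
    have hρ2 : ((s:ℝ)/n)^(l*t - s) ≤ Real.exp (-(((l*t - s : ℕ)):ℝ) * Real.log 2) := by
      have h12 : ((1:ℝ)/2)^(l*t-s) = Real.exp (-(((l*t - s:ℕ)):ℝ) * Real.log 2) := by
        rw [show ((1:ℝ)/2) = Real.exp (-Real.log 2) by
          rw [Real.exp_neg, Real.exp_log (by norm_num : (0:ℝ) < 2)]; norm_num]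
        rw [← Real.exp_nat_mul]; ring_nf
      rw [← h12]
      exact pow_le_pow_left₀ hρ0 hhalf _
    have hnt : (n:ℝ)^t = Real.exp ((t:ℝ) * Real.log n) := by
      rw [Real.exp_nat_mul, Real.exp_log hn0]
    calc ((n-k).choose t : ℝ) * (n.choose s) * (((s:ℕ):ℝ)/(n:ℝ))^(l*t)
        = ((n-k).choose t : ℝ) * ((n.choose s) * ((s:ℝ)/n)^s) * ((s:ℝ)/n)^(l*t - s) := by
          rw [hsplit]; ring
    _ ≤ (n:ℝ)^t * Real.exp s * Real.exp (-(((l*t - s : ℕ)):ℝ) * Real.log 2) := by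
        apply mul_le_mul _ hρ2 (by positivity) (by positivity)
        apply mul_le_mul hC1 hC2 (by positivity) (by positivity)
    _ = Real.exp ((t:ℝ) * Real.log n + s + (-(((l*t - s : ℕ)):ℝ) * Real.log 2)) := by
        rw [hnt, ← Real.exp_add, ← Real.exp_add]
    _ ≤ Real.exp (-(a+b)) := by
        apply Real.exp_le_exp.mpr
        have hcast : (((l*t - s : ℕ)):ℝ) = (l:ℝ)*t - s := by
          have h := Nat.cast_sub (R := ℝ) hslt
          push_cast at h ⊢; linarith
        rw [hcast]
        have h4 : 155*(t:ℝ) ≤ (l:ℝ)*t := mul_le_mul_of_nonneg_right hl150 (by positivity)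
        have h5 : (l:ℝ) ≤ (l:ℝ)*t := by
          have := mul_le_mul_of_nonneg_left hT1 (by positivity : (0:ℝ) ≤ (l:ℝ))
          linarith
        have h1 : (t:ℝ)*Real.log n ≤ (t:ℝ)*((l:ℝ)/27) :=
          mul_le_mul_of_nonneg_left (hLN.trans ha27) (by positivity)
        have h2 : ((l:ℝ)*t - s) * 0.6931 ≤ ((l:ℝ)*t - s) * Real.log 2 :=
          mul_le_mul_of_nonneg_left hlog2 (by linarith)
        have h3 : ((l:ℝ)*t - ((l:ℝ)/6 + t)) * 0.6931 ≤ ((l:ℝ)*t - s) * 0.6931 := by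
          have : (l:ℝ)*t - ((l:ℝ)/6 + t) ≤ (l:ℝ)*t - s := by linarith
          linarith
        linarith
    _ ≤ ε/((r:ℝ)*n) := htarget
  · -- Case 2 : s/n > 1/2
    set u : ℕ := n - s with hu_def
    have hu1 : 1 ≤ u := by omega
    have hsu : (s:ℝ) = (n:ℝ) - u := by
      have h : s + u = n := by omega
      have h2 := congrArg (Nat.cast : ℕ → ℝ) h
      push_cast at h2; linarith
    have hU1 : (1:ℝ) ≤ u := by exact_mod_cast hu1
    have hC1 : ((n-k).choose t : ℝ) ≤ (n:ℝ)^(u-1) := by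
      have hsymm : (n-k).choose t = (n-k).choose (u-1) := by
        rw [← Nat.choose_symm htm]; congr 1; omega
      calc ((n-k).choose t : ℝ) = ((n-k).choose (u-1) : ℝ) := by rw [hsymm]
      _ ≤ (((n-k)^(u-1):ℕ):ℝ) := by exact_mod_cast Nat.choose_le_pow _ _
      _ = ((n-k:ℕ):ℝ)^(u-1) := by push_cast; ring
      _ ≤ (n:ℝ)^(u-1) := by
          apply pow_le_pow_left₀ (by positivity)
          exact_mod_cast Nat.sub_le n k
    have hC2 : (n.choose s : ℝ) ≤ (n:ℝ)^u := by
      have hsymm : n.choose s = n.choose u := by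
        rw [← Nat.choose_symm (by omega : s ≤ n)]
      calc (n.choose s : ℝ) = (n.choose u : ℝ) := by rw [hsymm]
      _ ≤ ((n^u : ℕ):ℝ) := by exact_mod_cast Nat.choose_le_pow _ _
      _ = (n:ℝ)^u := by push_cast; ring
    have hρ : ((s:ℝ)/n)^(l*t) ≤ Real.exp (-(((l*t:ℕ)):ℝ)*((u:ℝ)/n)) := by
      have hbase : (s:ℝ)/n ≤ Real.exp (-(u:ℝ)/n) := by
        have := Real.add_one_le_exp (-(u:ℝ)/n)
        rw [hsu]
        have heq : ((n:ℝ) - u)/n = -(u:ℝ)/n + 1 := by field_simp; ring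
        rw [heq]; exact this
      calc ((s:ℝ)/n)^(l*t) ≤ (Real.exp (-(u:ℝ)/n))^(l*t) := by
            apply pow_le_pow_left₀ (by positivity) hbase
      _ = Real.exp (-(((l*t:ℕ)):ℝ)*((u:ℝ)/n)) := by
          rw [← Real.exp_nat_mul]; ring_nf
    have hnpow : ∀ m : ℕ, (n:ℝ)^m = Real.exp ((m:ℝ) * Real.log n) := by
      intro m; rw [Real.exp_nat_mul, Real.exp_log hn0]
    have h3T : (n:ℝ) ≤ 3*(t:ℝ) := by
      have h2s : (n:ℝ) + 1 ≤ 2*(s:ℝ) := by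
        have h := Nat.succ_le_of_lt hcase
        exact_mod_cast h
      have hKn : 6*(k:ℝ) ≤ n := by exact_mod_cast hkn6
      rw [hs_eq] at h2s; linarith
    calc ((n-k).choose t : ℝ) * (n.choose s) * (((s:ℕ):ℝ)/(n:ℝ))^(l*t)
        ≤ (n:ℝ)^(u-1) * (n:ℝ)^u * Real.exp (-(((l*t:ℕ)):ℝ)*((u:ℝ)/n)) := by
          apply mul_le_mul _ hρ (by positivity) (by positivity)
          apply mul_le_mul hC1 hC2 (by positivity) (by positivity)
    _ = Real.exp ((((u-1:ℕ)):ℝ) * Real.log n + (u:ℝ) * Real.log n + (-(((l*t:ℕ)):ℝ)*((u:ℝ)/n))) := by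
        rw [hnpow, hnpow, ← Real.exp_add, ← Real.exp_add]
    _ ≤ Real.exp (-(a+b)) := by
        apply Real.exp_le_exp.mpr
        have hum : (((u-1:ℕ)):ℝ) = (u:ℝ) - 1 := by
          push_cast [Nat.cast_sub hu1]; ring
        rw [hum, ← hLT]
        have hLU3 : (l:ℝ)*(u:ℝ)/3 ≤ (l:ℝ)*t*((u:ℝ)/n) := by
          have hkey : (l:ℝ)*t*((u:ℝ)/n) - (l:ℝ)*(u:ℝ)/3 = ((l:ℝ)*u) * ((3*t - n)/(3*n)) := by
            field_simp
          have hpos : (0:ℝ) ≤ ((l:ℝ)*u) * ((3*t - n)/(3*n)) := by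
            apply mul_nonneg (by positivity)
            apply div_nonneg (by linarith) (by positivity)
          linarith
        have h1 : ((u:ℝ)-1) * Real.log n ≤ ((u:ℝ)-1) * ((l:ℝ)/27) :=
          mul_le_mul_of_nonneg_left (hLN.trans ha27) (by linarith)
        have h2 : (u:ℝ) * Real.log n ≤ (u:ℝ) * ((l:ℝ)/27) :=
          mul_le_mul_of_nonneg_left (hLN.trans ha27) (by positivity)
        have h6 : (l:ℝ) ≤ (l:ℝ)*u := by
          have := mul_le_mul_of_nonneg_left hU1 (by positivity : (0:ℝ) ≤ (l:ℝ))
          linarith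
        linarith
    _ ≤ ε/((r:ℝ)*n) := htarget

lemma extraction_aux {α β : Type*} [DecidableEq α] [DecidableEq β] (k : ℕ) (C : Finset α) :
    ∀ (M : ℕ) (O : α → Finset β), (∑ c ∈ C, (O c).card) ≤ M →
    (∀ T ⊆ C, T.Nonempty → k + T.card ≤ (T.biUnion O).card) →
    ∃ S : α → Finset β, (∀ c, S c ⊆ O c) ∧ (∀ c ∈ C, (S c).card = k + 1) ∧
      ∀ T ⊆ C, T.Nonempty → k + T.card ≤ (T.biUnion S).card := by
  intro M
  induction M with
  | zero =>
    intro O hM h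
    refine ⟨O, fun c => Finset.Subset.refl _, fun c hc => ?_, h⟩
    have h1 := h {c} (by simpa using hc) ⟨c, mem_singleton_self c⟩
    simp only [card_singleton, singleton_biUnion] at h1
    have h2 : (O c).card ≤ ∑ c ∈ C, (O c).card :=
      Finset.single_le_sum (f := fun c => (O c).card) (fun i _ => Nat.zero_le _) hc
    omega
  | succ M ih =>
    intro O hM h
    by_cases hbig : ∃ c0 ∈ C, k + 2 ≤ (O c0).card
    · obtain ⟨c0, hc0, hc0big⟩ := hbig
      have hrem : ∃ x ∈ O c0, ∀ T ⊆ C, T.Nonempty →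
          k + T.card ≤ (T.biUnion (Function.update O c0 ((O c0).erase x))).card := by
        by_contra hno
        push_neg at hno
        have hbad : ∀ x ∈ O c0, ∃ T, T ⊆ C ∧ c0 ∈ T ∧
            (T.biUnion O).card = k + T.card ∧ x ∉ ((T.erase c0).biUnion O) := by
          intro x hx
          obtain ⟨T, hTC, hTne, hTbad⟩ := hno x hx
          have hc0T : c0 ∈ T := by
            by_contra hc0T
            have heq : T.biUnion (Function.update O c0 ((O c0).erase x)) = T.biUnion O := by
              apply biUnion_congr rfl
              intro c hc
              exact Function.update_of_ne (by rintro rfl; exact hc0T hc) _ _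
            rw [heq] at hTbad
            exact absurd (h T hTC hTne) (by omega)
          have hsub : (T.biUnion O) \ {x} ⊆ T.biUnion (Function.update O c0 ((O c0).erase x)) := by
            intro y hy
            simp only [mem_sdiff, mem_singleton, mem_biUnion] at hy ⊢
            obtain ⟨⟨c, hc, hyc⟩, hyx⟩ := hy
            refine ⟨c, hc, ?_⟩
            by_cases hcc : c = c0
            · subst hcc
              rw [Function.update_self]
              exact mem_erase.mpr ⟨hyx, hyc⟩
            · rw [Function.update_of_ne hcc]; exact hyc
          have hcard' : (T.biUnion O).card - 1 ≤ (T.biUnion (Function.update O c0 ((O c0).erase x))).card := by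
            have h1 := card_le_card hsub
            have h2 : (T.biUnion O).card - 1 ≤ ((T.biUnion O) \ {x}).card := by
              have := Finset.le_card_sdiff {x} (T.biUnion O)
              simp only [card_singleton] at this
              omega
            omega
          have hh := h T hTC hTne
          have htight : (T.biUnion O).card = k + T.card := by omega
          refine ⟨T, hTC, hc0T, htight, ?_⟩
          intro hxmem
          have hsub2 : T.biUnion O ⊆ T.biUnion (Function.update O c0 ((O c0).erase x)) := by
            intro y hy
            by_cases hyx : y = x
            · subst hyx
              simp only [mem_biUnion] at hxmem ⊢
              obtain ⟨c, hc, hyc⟩ := hxmem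
              refine ⟨c, mem_of_mem_erase hc, ?_⟩
              rw [Function.update_of_ne (ne_of_mem_erase hc)]
              exact hyc
            · exact hsub (by simp [hy, hyx])
          have := card_le_card hsub2
          omega
        obtain ⟨x0, hx0⟩ : (O c0).Nonempty := card_pos.mp (by omega)
        set F := (C.powerset.filter (fun T => c0 ∈ T ∧ (T.biUnion O).card = k + T.card)) with hF
        have hFne : F.Nonempty := by
          obtain ⟨T, hTC, hc0T, htight, _⟩ := hbad x0 hx0
          exact ⟨T, by simp [hF, mem_filter, mem_powerset, hTC, hc0T, htight]⟩
        obtain ⟨T₀, hT₀F, hT₀min⟩ := F.exists_min_image card hFne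
        simp only [hF, mem_filter, mem_powerset] at hT₀F
        obtain ⟨hT₀C, hc0T₀, hT₀tight⟩ := hT₀F
        have hT₀sub : ∀ x ∈ O c0, x ∉ ((T₀.erase c0).biUnion O) := by
          intro x hx
          obtain ⟨T, hTC, hc0T, htight, hxT⟩ := hbad x hx
          have hbU : (T₀ ∪ T).biUnion O = (T₀.biUnion O) ∪ (T.biUnion O) := by
            ext y
            simp only [mem_biUnion, mem_union]
            constructor
            · rintro ⟨c, hc | hc, hyc⟩
              exacts [Or.inl ⟨c, hc, hyc⟩, Or.inr ⟨c, hc, hyc⟩]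
            · rintro (⟨c, hc, hyc⟩ | ⟨c, hc, hyc⟩)
              exacts [⟨c, Or.inl hc, hyc⟩, ⟨c, Or.inr hc, hyc⟩]
          have hUcard : ((T₀ ∪ T).biUnion O).card + ((T₀.biUnion O) ∩ (T.biUnion O)).card
              = (T₀.biUnion O).card + (T.biUnion O).card := by
            rw [hbU]; exact card_union_add_card_inter _ _
          have hIsub : (T₀ ∩ T).biUnion O ⊆ (T₀.biUnion O) ∩ (T.biUnion O) := by
            intro y hy
            simp only [mem_biUnion, mem_inter] at hy ⊢
            obtain ⟨c, hc, hyc⟩ := hy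
            exact ⟨⟨c, hc.1, hyc⟩, ⟨c, hc.2, hyc⟩⟩
          have hInane : (T₀ ∩ T).Nonempty := ⟨c0, mem_inter.mpr ⟨hc0T₀, hc0T⟩⟩
          have hUne : (T₀ ∪ T).Nonempty := ⟨c0, mem_union_left _ hc0T₀⟩
          have hU := h (T₀ ∪ T) (union_subset hT₀C hTC) hUne
          have hI := h (T₀ ∩ T) ((inter_subset_left).trans hT₀C) hInane
          have hcardsets : (T₀ ∪ T).card + (T₀ ∩ T).card = T₀.card + T.card :=
            card_union_add_card_inter _ _
          have hIcard := card_le_card hIsub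
          have hItight : ((T₀ ∩ T).biUnion O).card = k + (T₀ ∩ T).card := by omega
          have hmem : (T₀ ∩ T) ∈ F := by
            simp only [hF, mem_filter, mem_powerset]
            exact ⟨(inter_subset_left).trans hT₀C, mem_inter.mpr ⟨hc0T₀, hc0T⟩, hItight⟩
          have hle := hT₀min _ hmem
          have heq : T₀ ∩ T = T₀ := eq_of_subset_of_card_le inter_subset_left hle
          have hT₀T : T₀ ⊆ T := by rw [← heq]; exact inter_subset_right
          intro hxmem
          apply hxT
          exact biUnion_subset_biUnion_of_subset_left O (erase_subset_erase c0 hT₀T) hxmem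
        have hdisj : Disjoint (O c0) ((T₀.erase c0).biUnion O) :=
          disjoint_left.mpr (fun {x} hx => hT₀sub x hx)
        have hsplit : T₀.biUnion O = O c0 ∪ ((T₀.erase c0).biUnion O) := by
          conv_lhs => rw [← insert_erase hc0T₀]
          rw [biUnion_insert]
        have hcardsplit : (T₀.biUnion O).card = (O c0).card + ((T₀.erase c0).biUnion O).card := by
          rw [hsplit, card_union_of_disjoint hdisj]
        rcases (T₀.erase c0).eq_empty_or_nonempty with hemp | hne
        · rw [hemp] at hcardsplit
          simp only [biUnion_empty, card_empty] at hcardsplit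
          have hsing : T₀ = {c0} := by
            apply eq_singleton_iff_unique_mem.mpr
            refine ⟨hc0T₀, fun y hy => ?_⟩
            by_contra hyc
            exact (notMem_empty y) (hemp ▸ mem_erase.mpr ⟨hyc, hy⟩)
          rw [hsing] at hT₀tight
          simp only [singleton_biUnion, card_singleton] at hT₀tight
          omega
        · have hrest := h _ ((erase_subset c0 T₀).trans hT₀C) hne
          have hecard : (T₀.erase c0).card = T₀.card - 1 := card_erase_of_mem hc0T₀
          have hT₀pos : 1 ≤ T₀.card := card_pos.mpr ⟨c0, hc0T₀⟩
          omega
      obtain ⟨x, hx, hgood⟩ := hrem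
      have hsum : ∑ c ∈ C, ((Function.update O c0 ((O c0).erase x)) c).card ≤ M := by
        rw [Finset.sum_eq_sum_sdiff_singleton_add hc0
          (fun c => ((Function.update O c0 ((O c0).erase x)) c).card)]
        have e1 : ∀ c ∈ C \ {c0}, ((Function.update O c0 ((O c0).erase x)) c).card = (O c).card := by
          intro c hc
          rw [Function.update_of_ne (by simp only [mem_sdiff, mem_singleton] at hc; exact hc.2)]
        rw [Finset.sum_congr rfl e1, Function.update_self, card_erase_of_mem hx]
        have h2 := Finset.sum_eq_sum_sdiff_singleton_add hc0 (fun c => (O c).card)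
        omega
      obtain ⟨S, hS1, hS2, hS3⟩ := ih _ hsum hgood
      refine ⟨S, fun c => (hS1 c).trans ?_, hS2, hS3⟩
      by_cases hcc : c = c0
      · subst hcc
        rw [Function.update_self]
        exact erase_subset _ _
      · rw [Function.update_of_ne hcc]
    · push_neg at hbig
      refine ⟨O, fun c => Finset.Subset.refl _, fun c hc => ?_, h⟩
      have h1 := h {c} (by simpa using hc) ⟨c, mem_singleton_self c⟩
      simp only [card_singleton, singleton_biUnion] at h1
      have := hbig c hc
      omega

section counting
variable {r' m l j n : ℕ} (i0 : Fin j)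

def colConf (i0 : Fin j) (n : ℕ) (R : Finset (Fin n)) (l : ℕ) : Finset (Fin l → Fin j → Fin n) :=
  Fintype.piFinset (fun _ : Fin l => Fintype.piFinset (fun i : Fin j => if i = i0 then R else univ))

lemma mem_colConf {R : Finset (Fin n)} {f : Fin l → Fin j → Fin n} :
    f ∈ colConf i0 n R l ↔ ∀ d, f d i0 ∈ R := by
  simp only [colConf, Fintype.mem_piFinset]
  constructor
  · intro h d
    have := h d i0
    simpa using this
  · intro h d i
    by_cases hi : i = i0
    · subst hi; simpa using h d
    · simp [hi]

lemma card_colConf (R : Finset (Fin n)) :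
    (colConf i0 n R l (j := j)).card = (R.card * n^(j-1))^l := by
  rw [colConf, Fintype.card_piFinset]
  have hcell : (Fintype.piFinset (fun i : Fin j => if i = i0 then R else univ)).card
      = R.card * n^(j-1) := by
    rw [Fintype.card_piFinset]
    rw [← Finset.mul_prod_erase univ _ (mem_univ i0)]
    simp only [if_pos rfl]
    congr 1
    rw [Finset.prod_congr rfl (fun i hi => by
      rw [if_neg (Finset.ne_of_mem_erase hi)])]
    rw [Finset.prod_const, Finset.card_erase_of_mem (mem_univ i0)]
    simp [Finset.card_univ]
  rw [Finset.prod_congr rfl (fun _ _ => hcell), Finset.prod_const, Finset.card_univ,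
    Fintype.card_fin]

def badEvent (i0 : Fin j) (n r' m l : ℕ) (s : Fin r') (T : Finset (Fin m)) (R : Finset (Fin n)) :
    Finset ((Fin r' × Fin m) → Fin l → Fin j → Fin n) :=
  Fintype.piFinset (fun c : Fin r' × Fin m =>
    if c.1 = s ∧ c.2 ∈ T then colConf i0 n R l else univ)

lemma mem_badEvent {s : Fin r'} {T : Finset (Fin m)} {R : Finset (Fin n)}
    {ω : (Fin r' × Fin m) → Fin l → Fin j → Fin n} :
    ω ∈ badEvent i0 n r' m l s T R ↔ ∀ t ∈ T, ∀ d, ω (s, t) d i0 ∈ R := by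
  simp only [badEvent, Fintype.mem_piFinset]
  constructor
  · intro h t ht d
    have := h (s, t)
    rw [if_pos ⟨rfl, ht⟩] at this
    exact (mem_colConf i0).mp this d
  · intro h c
    by_cases hc : c.1 = s ∧ c.2 ∈ T
    · rw [if_pos hc, mem_colConf]
      intro d
      have := h c.2 hc.2 d
      rwa [← hc.1, Prod.mk.eta] at this
    · rw [if_neg hc]; exact mem_univ _
end counting
section counting2
variable {r' m l j n : ℕ}
lemma card_badEvent (i0 : Fin j) (s : Fin r') (T : Finset (Fin m)) (R : Finset (Fin n)) :
    (badEvent i0 n r' m l s T R).card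
      = ((R.card * n^(j-1))^l)^T.card * ((Fintype.card (Fin l → Fin j → Fin n))^(r'*m - T.card)) := by
  rw [badEvent, Fintype.card_piFinset]
  simp only [apply_ite Finset.card]
  rw [Finset.prod_ite (fun _ => (colConf i0 n R l).card) (fun _ => (univ : Finset (Fin l → Fin j → Fin n)).card)]
  have hfilter : (univ.filter (fun c : Fin r' × Fin m => c.1 = s ∧ c.2 ∈ T)) = {s} ×ˢ T := by
    ext c
    simp only [Finset.mem_filter, Finset.mem_univ, true_and, Finset.mem_product,
      Finset.mem_singleton]
  have hcard1 : (univ.filter (fun c : Fin r' × Fin m => c.1 = s ∧ c.2 ∈ T)).card = T.card := by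
    rw [hfilter, Finset.card_product, card_singleton, one_mul]
  have hcard2 : (univ.filter (fun c : Fin r' × Fin m => ¬(c.1 = s ∧ c.2 ∈ T))).card
      = r'*m - T.card := by
    have := Finset.card_filter_add_card_filter_not
      (s := (univ : Finset (Fin r' × Fin m))) (fun c => c.1 = s ∧ c.2 ∈ T)
    have hu : (univ : Finset (Fin r' × Fin m)).card = r'*m := by
      simp [Finset.card_univ]
    omega
  rw [Finset.prod_const, Finset.prod_const, hcard1, hcard2, card_colConf, card_univ]
end counting2


lemma glue (n k r' m l j : ℕ) (i0 : Fin j) (hn0 : 0 < n) (hr'0 : 0 < r')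
    (ω : (Fin r' × Fin m) → Fin l → Fin j → Fin n)
    (hGood : ∀ s : Fin r', ∀ T : Finset (Fin m), T.Nonempty →
      k + T.card ≤ (T.biUnion (fun t => univ.image (fun d => ω (s,t) d i0))).card) :
    ∃ G : (Fin r' × Fin m) → Finset (Fin j → Fin n),
      (∀ c, G c ⊆ univ.image (ω c) ∧ (G c).card = k + 1) ∧
      ∀ T : Finset (Fin r' × Fin m), T.Nonempty →
        (T.card : ℤ) ≤ (r' : ℤ) *
          ((((T.biUnion G).image (fun v => v i0)).card : ℤ) - (k : ℤ)) := by
  classical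
  have hex : ∀ s : Fin r', ∃ S : Fin m → Finset (Fin n),
      (∀ t, S t ⊆ univ.image (fun d => ω (s,t) d i0)) ∧
      (∀ t ∈ (univ : Finset (Fin m)), (S t).card = k+1) ∧
      (∀ T ⊆ (univ : Finset (Fin m)), T.Nonempty → k + T.card ≤ (T.biUnion S).card) :=
    fun s => extraction_aux k univ _ (fun t => univ.image (fun d => ω (s,t) d i0)) le_rfl
      (fun T _ hT => hGood s T hT)
  choose S hS1 hS2 hS3 using hex
  set pick : (Fin r' × Fin m) → Fin n → (Fin j → Fin n) :=
    fun c v => if h : ∃ d : Fin l, ω c d i0 = v then ω c (Classical.choose h)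
      else (fun _ => ⟨0, hn0⟩) with hpickdef
  have hpick : ∀ c v, v ∈ S c.1 c.2 → (pick c v ∈ univ.image (ω c) ∧ pick c v i0 = v) := by
    intro c v hv
    have hvO : v ∈ univ.image (fun d => ω (c.1, c.2) d i0) := hS1 c.1 c.2 hv
    rw [Finset.mem_image] at hvO
    obtain ⟨d, _, hd⟩ := hvO
    have hexd : ∃ d : Fin l, ω c d i0 = v := ⟨d, by simpa using hd⟩
    rw [hpickdef]
    simp only [dif_pos hexd]
    exact ⟨Finset.mem_image.mpr ⟨Classical.choose hexd, mem_univ _, rfl⟩,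
      Classical.choose_spec hexd⟩
  refine ⟨fun c => (S c.1 c.2).image (pick c), fun c => ⟨?_, ?_⟩, ?_⟩
  · intro y hy
    rw [Finset.mem_image] at hy
    obtain ⟨v, hv, hyv⟩ := hy
    exact hyv ▸ (hpick c v hv).1
  · rw [Finset.card_image_of_injOn, hS2 c.1 c.2 (mem_univ _)]
    intro v hv v' hv' heq
    have h1 := (hpick c v hv).2
    have h2 := (hpick c v' hv').2
    rw [← h1, ← h2, heq]
  · intro T hTne
    have hne : (univ : Finset (Fin r')).Nonempty := by
      have : Nonempty (Fin r') := ⟨⟨0, hr'0⟩⟩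
      exact univ_nonempty
    obtain ⟨sm, _, hmax⟩ := Finset.exists_max_image univ
      (fun s : Fin r' => (T.filter (fun c : Fin r' × Fin m => c.1 = s)).card) hne
    have hsumT : T.card = ∑ s : Fin r', (T.filter (fun c => c.1 = s)).card :=
      Finset.card_eq_sum_card_fiberwise (fun x _ => mem_univ x.1)
    set cm := (T.filter (fun c => c.1 = sm)).card with hcm
    have hTle : T.card ≤ r' * cm := by
      rw [hsumT]
      calc ∑ s : Fin r', (T.filter (fun c => c.1 = s)).card
          ≤ ∑ _s : Fin r', cm := Finset.sum_le_sum (fun s _ => hmax s (mem_univ s))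
      _ = r' * cm := by rw [Finset.sum_const, Finset.card_univ, Fintype.card_fin, smul_eq_mul]
    have hc1 : 1 ≤ cm := by
      obtain ⟨c, hc⟩ := hTne
      have h1 : c ∈ T.filter (fun x => x.1 = c.1) := mem_filter.mpr ⟨hc, rfl⟩
      have h2 : 1 ≤ (T.filter (fun x => x.1 = c.1)).card := card_pos.mpr ⟨c, h1⟩
      exact le_trans h2 (hmax c.1 (mem_univ _))
    set T' := (T.filter (fun c => c.1 = sm)).image Prod.snd with hT'
    have hT'card : T'.card = cm := by
      rw [hT']
      apply Finset.card_image_of_injOn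
      intro a ha b hb hab
      have ha1 : a.1 = sm := (mem_filter.mp ha).2
      have hb1 : b.1 = sm := (mem_filter.mp hb).2
      exact Prod.ext (ha1.trans hb1.symm) hab
    have hT'ne : T'.Nonempty := by
      rw [← card_pos, hT'card]; omega
    have hHall := hS3 sm T' (subset_univ _) hT'ne
    rw [hT'card] at hHall
    have hsub : T'.biUnion (S sm) ⊆ (T.biUnion (fun c => (S c.1 c.2).image (pick c))).image
        (fun v => v i0) := by
      intro y hy
      rw [Finset.mem_biUnion] at hy
      obtain ⟨t, ht, hyt⟩ := hy
      rw [hT', Finset.mem_image] at ht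
      obtain ⟨c, hc, hct⟩ := ht
      have hc1' : c.1 = sm := (mem_filter.mp hc).2
      have hcT : c ∈ T := (mem_filter.mp hc).1
      have hyS : y ∈ S c.1 c.2 := by rw [hc1', hct]; exact hyt
      rw [Finset.mem_image]
      refine ⟨pick c y, ?_, (hpick c y hyS).2⟩
      rw [Finset.mem_biUnion]
      exact ⟨c, hcT, Finset.mem_image.mpr ⟨y, hyS, rfl⟩⟩
    have hfinal : k + cm ≤ ((T.biUnion (fun c => (S c.1 c.2).image (pick c))).image
        (fun v => v i0)).card := le_trans hHall (card_le_card hsub)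
    have hZ1 : (T.card : ℤ) ≤ (r' : ℤ) * cm := by exact_mod_cast hTle
    have hZ2 : (cm : ℤ) ≤ (((T.biUnion (fun c => (S c.1 c.2).image (pick c))).image
        (fun v => v i0)).card : ℤ) - k := by
      have : ((k + cm : ℕ) : ℤ) ≤ _ := Int.ofNat_le.mpr hfinal
      push_cast at this ⊢
      linarith
    calc (T.card : ℤ) ≤ (r' : ℤ) * cm := hZ1
    _ ≤ (r' : ℤ) * (_ - k) := by
        apply mul_le_mul_of_nonneg_left hZ2 (by positivity)
lemma badEvent_card_real {r' m l j n : ℕ} (i0 : Fin j) (s : Fin r') (T : Finset (Fin m))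
    (R : Finset (Fin n)) (k : ℕ)
    (hj1 : 1 ≤ j) (hn0 : 0 < n) (hr'0 : 0 < r')
    (hzR : R.card = k + T.card - 1) :
    ((badEvent i0 n r' m l s T R).card : ℝ)
      = (Fintype.card ((Fin r' × Fin m) → Fin l → Fin j → Fin n) : ℝ)
        * (((k + T.card - 1 : ℕ) : ℝ)/(n:ℝ))^(l * T.card) := by
  have hnR : (0:ℝ) < n := by exact_mod_cast hn0
  set t := T.card with ht_def
  have htm : t ≤ m := by
    have := card_le_univ T
    simpa using this
  have htN : t ≤ r' * m := le_trans htm (Nat.le_mul_of_pos_left m hr'0)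
  have hcs : Fintype.card (Fin l → Fin j → Fin n) = (n^j)^l := by
    rw [Fintype.card_fun, Fintype.card_fun]
    simp [Fintype.card_fin]
  have hΩcard : Fintype.card ((Fin r' × Fin m) → Fin l → Fin j → Fin n) = ((n^j)^l)^(r' * m) := by
    rw [Fintype.card_fun, hcs]
    congr 1
    simp [Fintype.card_prod, Fintype.card_fin]
  have hnj : ((n:ℝ))^j = (n:ℝ)^(j-1) * n := by
    rw [← pow_succ]
    congr 1
    omega
  have hsplit : ((R.card : ℝ) * (n:ℝ)^(j-1)) = ((n:ℝ)^j) * (((k + t - 1 : ℕ):ℝ)/(n:ℝ)) := by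
    rw [hzR, hnj]
    field_simp
  rw [card_badEvent, hcs, hΩcard]
  push_cast
  rw [hsplit]
  calc (((n:ℝ)^j * (((k + t - 1 : ℕ):ℝ)/(n:ℝ)))^l)^t * (((n:ℝ)^j)^l)^(r'*m - t)
      = ((((n:ℝ)^j)^l)^t * (((n:ℝ)^j)^l)^(r'*m - t)) * ((((k + t - 1 : ℕ):ℝ)/(n:ℝ))^l)^t := by
        rw [mul_pow, mul_pow]
        ring
  _ = (((n:ℝ)^j)^l)^(r'*m) * (((k + t - 1 : ℕ):ℝ)/(n:ℝ))^(l*t) := by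
      have hexp : t + (r'*m - t) = r'*m := by omega
      rw [← pow_add, hexp]
      ring

lemma sumBound (j n ri' r' r l m : ℕ) (i0 : Fin j) (ε : ℝ)
    (hj1 : 1 ≤ j) (hn0 : 0 < n) (hri'0 : 0 < ri') (hr'0 : 0 < r') (hr0 : 0 < r)
    (hm : m = n - ri') (hm1 : 1 ≤ m)
    (hri'n : (ri' : ℝ) ≤ (n : ℝ) / 6) (hn201 : 201 ≤ n) (hε0 : 0 < ε) (hε1 : ε < 1)
    (hkl : 6*ri' < l)
    (hlb1 : 27 * Real.log ((n:ℝ)/ε) + 9 * Real.log (2*(r:ℝ)/ε) + 18 ≤ (l:ℝ)) :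
    ∑ z ∈ (univ.filter (fun z : Fin r' × Finset (Fin m) × Finset (Fin n) =>
        z.2.1.Nonempty ∧ z.2.2.card = ri' + z.2.1.card - 1)),
      ((badEvent i0 n r' m l z.1 z.2.1 z.2.2).card : ℝ)
    ≤ (ε * r' / r) * (Fintype.card ((Fin r' × Fin m) → Fin l → (Fin j → Fin n)) : ℝ) := by
  set Idx := (univ.filter (fun z : Fin r' × Finset (Fin m) × Finset (Fin n) =>
      z.2.1.Nonempty ∧ z.2.2.card = ri' + z.2.1.card - 1)) with hIdx
  have hΩpos : (0:ℝ) < (Fintype.card ((Fin r' × Fin m) → Fin l → (Fin j → Fin n)) : ℝ) := by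
    haveI : Nonempty (Fin n) := ⟨⟨0, hn0⟩⟩
    have : 0 < Fintype.card ((Fin r' × Fin m) → Fin l → (Fin j → Fin n)) := Fintype.card_pos
    exact_mod_cast this
  have hbadcard : ∀ z ∈ Idx, ((badEvent i0 n r' m l z.1 z.2.1 z.2.2).card : ℝ)
      = (Fintype.card ((Fin r' × Fin m) → Fin l → (Fin j → Fin n)) : ℝ)
        * (((ri' + z.2.1.card - 1 : ℕ) : ℝ)/(n:ℝ))^(l * z.2.1.card) := by
    intro z hz
    rw [hIdx, mem_filter] at hz
    exact badEvent_card_real i0 z.1 z.2.1 z.2.2 ri' hj1 hn0 hr'0 hz.2.2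
  rw [Finset.sum_congr rfl hbadcard, ← Finset.mul_sum, mul_comm]
  apply mul_le_mul_of_nonneg_right _ hΩpos.le
  have hmaps : ∀ z ∈ Idx, z.2.1.card ∈ Finset.Icc 1 m := by
    intro z hz
    rw [hIdx, mem_filter] at hz
    rw [Finset.mem_Icc]
    refine ⟨card_pos.mpr hz.2.1, ?_⟩
    have := card_le_univ z.2.1
    simpa using this
  rw [← Finset.sum_fiberwise_of_maps_to hmaps]
  have hfiber : ∀ t ∈ Finset.Icc 1 m,
      (∑ z ∈ Idx.filter (fun z => z.2.1.card = t),
        (((ri' + z.2.1.card - 1 : ℕ) : ℝ)/(n:ℝ))^(l * z.2.1.card))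
      ≤ (r' : ℝ) * (ε / ((r:ℝ)*n)) := by
    intro t ht
    rw [Finset.mem_Icc] at ht
    have hconst : ∀ z ∈ Idx.filter (fun z => z.2.1.card = t),
        (((ri' + z.2.1.card - 1 : ℕ) : ℝ)/(n:ℝ))^(l * z.2.1.card)
        = (((ri' + t - 1 : ℕ) : ℝ)/(n:ℝ))^(l * t) := by
      intro z hz
      rw [mem_filter] at hz
      rw [hz.2]
    rw [Finset.sum_congr rfl hconst, Finset.sum_const, nsmul_eq_mul]
    have hcardIdx : (Idx.filter (fun z => z.2.1.card = t)).card
        ≤ r' * (m.choose t * n.choose (ri'+t-1)) := by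
      have hsub : Idx.filter (fun z => z.2.1.card = t) ⊆
          univ ×ˢ ((powersetCard t (univ : Finset (Fin m))) ×ˢ
            (powersetCard (ri'+t-1) (univ : Finset (Fin n)))) := by
        intro z hz
        rw [mem_filter, hIdx, mem_filter] at hz
        obtain ⟨⟨_, hzne, hzR⟩, hzt⟩ := hz
        rw [Finset.mem_product, Finset.mem_product, Finset.mem_powersetCard,
          Finset.mem_powersetCard]
        exact ⟨mem_univ _, ⟨subset_univ _, hzt⟩, ⟨subset_univ _, by rw [hzR, hzt]⟩⟩
      have := card_le_card hsub
      rwa [Finset.card_product, Finset.card_product, Finset.card_powersetCard,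
        Finset.card_powersetCard, Finset.card_univ, Finset.card_univ, Finset.card_univ,
        Fintype.card_fin, Fintype.card_fin, Fintype.card_fin] at this
    have htb := termBound n ri' r l t ε hri'0 ht.1 (by omega)
      hri'n hn201 hr0 hε0 hε1 hkl hlb1
    rw [← hm] at htb
    have hρpos : (0:ℝ) ≤ (((ri' + t - 1 : ℕ) : ℝ)/(n:ℝ))^(l*t) := by positivity
    calc ((Idx.filter (fun z => z.2.1.card = t)).card : ℝ)
          * (((ri' + t - 1 : ℕ) : ℝ)/(n:ℝ))^(l * t)
        ≤ ((r' * (m.choose t * n.choose (ri'+t-1)) : ℕ) : ℝ)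
          * (((ri' + t - 1 : ℕ) : ℝ)/(n:ℝ))^(l * t) := by
          apply mul_le_mul_of_nonneg_right _ hρpos
          exact_mod_cast hcardIdx
    _ = (r' : ℝ) * ((m.choose t : ℝ) * (n.choose (ri'+t-1))
          * (((ri' + t - 1 : ℕ) : ℝ)/(n:ℝ))^(l * t)) := by push_cast; ring
    _ ≤ (r' : ℝ) * (ε / ((r:ℝ)*n)) := by
          apply mul_le_mul_of_nonneg_left htb (by positivity)
  calc ∑ t ∈ Finset.Icc 1 m, (∑ z ∈ Idx.filter (fun z => z.2.1.card = t),
        (((ri' + z.2.1.card - 1 : ℕ) : ℝ)/(n:ℝ))^(l * z.2.1.card))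
      ≤ ∑ t ∈ Finset.Icc 1 m, (r' : ℝ) * (ε / ((r:ℝ)*n)) := Finset.sum_le_sum hfiber
  _ = (m : ℝ) * ((r' : ℝ) * (ε / ((r:ℝ)*n))) := by
      rw [Finset.sum_const, Nat.card_Icc, nsmul_eq_mul]
      norm_num
  _ ≤ ε * r' / r := by
      have hmn : (m:ℝ) ≤ n := by
        have h : m ≤ n := by omega
        exact_mod_cast h
      have hrpos : (0:ℝ) < r := by exact_mod_cast hr0
      have hnpos : (0:ℝ) < n := by exact_mod_cast hn0
      have h1 : (m:ℝ) * ((r':ℝ) * (ε/((r:ℝ)*n))) = ((m:ℝ)/n) * (ε * r'/r) := by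
        field_simp
      rw [h1]
      apply mul_le_of_le_one_left (by positivity)
      rw [div_le_one hnpos]
      exact hmn




/-- Lemma 12: for `1 ≤ i ≤ j ≤ d−1`, consider `r'` pairwise disjoint sets of `n − r'ᵢ`
columns of the `j`-th unfolding of a random sampling pattern (columns indexed by
`Fin r' × Fin (n − r'ᵢ)`), where the set of observed positions of each column is the
image of `l` i.i.d. draws uniform on its `n^j` cells `{1,…,n}^j`, independently across
columns (modelled by the uniform counting probability on the outcome space).
Under the stated conditions, with probability at least `1 − ε·r'/r` there exist subsets
`G c` of the observed positions of each column with `|G c| = r'ᵢ + 1` such that every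
nonempty subfamily `T` of columns satisfies `r'·(mᵢ(T) − r'ᵢ) ≥ |T|`, where `mᵢ(T)` is
the number of distinct values of the `i`-th coordinate among `⋃_{c ∈ T} G c`. -/
theorem stmt11 (d j i : ℕ) (hd : 2 ≤ d) (hj1 : 1 ≤ j) (hjd : j ≤ d - 1)
    (hi1 : 1 ≤ i) (hij : i ≤ j)
    (rk : ℕ → ℕ) (hrk0 : rk 0 = 1) (hrkd : rk d = 1)
    (hrkpos : ∀ k, k ≤ d → 0 < rk k)
    (n ri' r' r l : ℕ) (hn0 : 0 < n) (hri'0 : 0 < ri') (hr'0 : 0 < r') (hr0 : 0 < r)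
    (hl0 : 0 < l)
    (ε : ℝ) (hε0 : 0 < ε) (hε1 : ε < 1)
    (hri'n : (ri' : ℝ) ≤ (n : ℝ) / 6)
    (hr'r : r' ≤ r) (hrS : r ≤ ∑ k ∈ Finset.Icc 1 (d - 1), rk (k - 1) * rk k)
    (hnbig : max 200 (∑ k ∈ Finset.Icc 1 (d - 1), rk (k - 1) * rk k) < n)
    (hlb : (l : ℝ) >
      max (27 * Real.log (n / ε) + 9 * Real.log (2 * r / ε) + 18) (6 * ri')) :
    1 - ε * r' / r ≤
      (Nat.card {ω : (Fin r' × Fin (n - ri')) → Fin l → (Fin j → Fin n) //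
          ∃ G : (Fin r' × Fin (n - ri')) → Finset (Fin j → Fin n),
            (∀ c, G c ⊆ Finset.univ.image (ω c) ∧ (G c).card = ri' + 1) ∧
            ∀ T : Finset (Fin r' × Fin (n - ri')), T.Nonempty →
              (T.card : ℤ) ≤ (r' : ℤ) *
                ((((T.biUnion G).image (fun v => v ⟨i - 1, by omega⟩)).card : ℤ) -
                  (ri' : ℤ))} : ℝ) /
        (Fintype.card ((Fin r' × Fin (n - ri')) → Fin l → (Fin j → Fin n)) : ℝ) := by
  classical
  have hn201 : 201 ≤ n := by
    have := lt_of_le_of_lt (le_max_left 200 (∑ k ∈ Finset.Icc 1 (d - 1), rk (k - 1) * rk k)) hnbig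
    omega
  have hkl : 6 * ri' < l := by
    have h : (6 * (ri':ℝ)) < l := lt_of_le_of_lt (le_max_right _ _) hlb
    exact_mod_cast h
  have hlb1 : 27 * Real.log ((n:ℝ)/ε) + 9 * Real.log (2*(r:ℝ)/ε) + 18 ≤ (l:ℝ) :=
    le_of_lt (lt_of_le_of_lt (le_max_left _ _) hlb)
  have hkn6 : 6 * ri' ≤ n := by
    have h : (6:ℝ) * ri' ≤ n := by linarith
    exact_mod_cast h
  have hm1 : 1 ≤ n - ri' := by omega
  set m := n - ri' with hm_def
  set i0 : Fin j := ⟨i - 1, by omega⟩ with hi0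
  set GoodP : ((Fin r' × Fin m) → Fin l → (Fin j → Fin n)) → Prop := fun ω =>
    ∀ s : Fin r', ∀ T : Finset (Fin m), T.Nonempty →
      ri' + T.card ≤ (T.biUnion (fun t => univ.image (fun d => ω (s,t) d i0))).card
    with hGoodP
  haveI : Nonempty (Fin n) := ⟨⟨0, hn0⟩⟩
  have hΩpos : (0:ℝ) < (Fintype.card ((Fin r' × Fin m) → Fin l → (Fin j → Fin n)) : ℝ) := by
    have h : 0 < Fintype.card ((Fin r' × Fin m) → Fin l → (Fin j → Fin n)) := Fintype.card_pos
    exact_mod_cast h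
  set Idx : Finset (Fin r' × Finset (Fin m) × Finset (Fin n)) :=
    univ.filter (fun z => z.2.1.Nonempty ∧ z.2.2.card = ri' + z.2.1.card - 1) with hIdx
  have hcover : (univ.filter (fun ω : (Fin r' × Fin m) → Fin l → (Fin j → Fin n) => ¬ (GoodP ω))) ⊆
      Idx.biUnion (fun z => badEvent i0 n r' m l z.1 z.2.1 z.2.2) := by
    intro ω hω
    simp only [mem_filter, mem_univ, true_and, hGoodP] at hω
    push_neg at hω
    obtain ⟨s, T, hTne, hlt⟩ := hω
    have hTcard : T.card ≤ m := by
      have := card_le_univ T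
      simpa using this
    have hcard1 : (T.biUnion (fun t => univ.image (fun d => ω (s,t) d i0))).card
        ≤ ri' + T.card - 1 := by omega
    have hsize : ri' + T.card - 1 ≤ Fintype.card (Fin n) := by
      rw [Fintype.card_fin]; omega
    obtain ⟨R, hRsub, hRcard⟩ := Finset.exists_superset_card_eq hcard1 hsize
    refine mem_biUnion.mpr ⟨(s, T, R), ?_, ?_⟩
    · rw [hIdx, mem_filter]
      exact ⟨mem_univ _, hTne, hRcard⟩
    · rw [mem_badEvent i0]
      intro t ht dd
      apply hRsub
      exact mem_biUnion.mpr ⟨t, ht, mem_image.mpr ⟨dd, mem_univ dd, rfl⟩⟩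
  have hsum := sumBound j n ri' r' r l m i0 ε hj1 hn0 hri'0 hr'0 hr0 hm_def hm1
    hri'n hn201 hε0 hε1 hkl hlb1
  rw [← hIdx] at hsum
  -- bound the bad set
  have hBcard : ((univ.filter (fun ω : (Fin r' × Fin m) → Fin l → (Fin j → Fin n) =>
      ¬ (GoodP ω))).card : ℝ)
      ≤ (ε * r' / r) * (Fintype.card ((Fin r' × Fin m) → Fin l → (Fin j → Fin n)) : ℝ) := by
    have h1 : (univ.filter (fun ω : (Fin r' × Fin m) → Fin l → (Fin j → Fin n) =>
        ¬ (GoodP ω))).card ≤ ∑ z ∈ Idx, (badEvent i0 n r' m l z.1 z.2.1 z.2.2).card :=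
      le_trans (card_le_card hcover) (card_biUnion_le)
    calc ((univ.filter (fun ω : (Fin r' × Fin m) → Fin l → (Fin j → Fin n) =>
          ¬ (GoodP ω))).card : ℝ)
        ≤ ((∑ z ∈ Idx, (badEvent i0 n r' m l z.1 z.2.1 z.2.2).card : ℕ) : ℝ) := by
          exact_mod_cast h1
    _ = ∑ z ∈ Idx, ((badEvent i0 n r' m l z.1 z.2.1 z.2.2).card : ℝ) := by push_cast; rfl
    _ ≤ _ := hsum
  -- rewrite goal
  rw [Nat.card_eq_fintype_card, Fintype.card_subtype]
  rw [le_div_iff₀ hΩpos]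
  have hPsub : (univ.filter GoodP) ⊆ univ.filter (fun ω : (Fin r' × Fin m) → Fin l → (Fin j → Fin n) =>
      ∃ G : (Fin r' × Fin m) → Finset (Fin j → Fin n),
        (∀ c, G c ⊆ Finset.univ.image (ω c) ∧ (G c).card = ri' + 1) ∧
        ∀ T : Finset (Fin r' × Fin m), T.Nonempty →
          (T.card : ℤ) ≤ (r' : ℤ) *
            ((((T.biUnion G).image (fun v => v i0)).card : ℤ) - (ri' : ℤ))) := by
    intro ω hω
    rw [mem_filter] at hω ⊢
    refine ⟨hω.1, ?_⟩
    exact glue n ri' r' m l j i0 hn0 hr'0 ω (by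
      have := hω.2
      rw [hGoodP] at this
      exact this)
  have hsplitcard : (univ.filter GoodP).card
      + (univ.filter (fun ω : (Fin r' × Fin m) → Fin l → (Fin j → Fin n) => ¬ (GoodP ω))).card
      = Fintype.card ((Fin r' × Fin m) → Fin l → (Fin j → Fin n)) := by
    rw [Finset.card_filter_add_card_filter_not, card_univ]
  have hPcard := card_le_card hPsub
  have hPR : ((univ.filter GoodP).card : ℝ) ≤
      ((univ.filter (fun ω : (Fin r' × Fin m) → Fin l → (Fin j → Fin n) =>
        ∃ G : (Fin r' × Fin m) → Finset (Fin j → Fin n),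
          (∀ c, G c ⊆ Finset.univ.image (ω c) ∧ (G c).card = ri' + 1) ∧
          ∀ T : Finset (Fin r' × Fin m), T.Nonempty →
            (T.card : ℤ) ≤ (r' : ℤ) *
              ((((T.biUnion G).image (fun v => v i0)).card : ℤ) - (ri' : ℤ)))).card : ℝ) := by
    exact_mod_cast hPcard
  have hsplitR : ((univ.filter GoodP).card : ℝ)
      + ((univ.filter (fun ω : (Fin r' × Fin m) → Fin l → (Fin j → Fin n) => ¬ (GoodP ω))).card : ℝ)
      = (Fintype.card ((Fin r' × Fin m) → Fin l → (Fin j → Fin n)) : ℝ) := by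
    exact_mod_cast hsplitcard
  calc (1 - ε * r' / r) * (Fintype.card ((Fin r' × Fin m) → Fin l → (Fin j → Fin n)) : ℝ)
      = (Fintype.card ((Fin r' × Fin m) → Fin l → (Fin j → Fin n)) : ℝ)
        - (ε * r' / r) * (Fintype.card ((Fin r' × Fin m) → Fin l → (Fin j → Fin n)) : ℝ) := by
        ring
  _ ≤ ((univ.filter GoodP).card : ℝ) := by linarith
  _ ≤ _ := hPR
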